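/- Let x_1, ..., x_n ∈ {0,1} with n ≥ 1 satisfy the 'threshold' property: x_i = 1 if and only if i ≤ m for some 0 ≤ m ≤ n. Then for any reals c > 0 and d > 0, the inequality d ≤ c·(x_1 - ∑_{i=2}^n x_i/((i-1)i)) holds if and only if m ≥ 1 and d·m ≤ c. -/

import Mathlib

lemma tel_sum : ∀ m : ℕ, 1 ≤ m →
    ∑ i ∈ Finset.Icc 2 m, (1:ℝ) / (((i : ℝ) - 1) * i) = 1 - 1 / m := by
  intro m hm
  induction m with
  | zero => omega
  | succ k ih =>
    rcases Nat.eq_or_lt_of_le hm with h | h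
    · simp [← h]
    · have hk : 1 ≤ k := by omega
      rw [Finset.sum_Icc_succ_top (by omega : 2 ≤ k + 1), ih hk]
      have hk0 : (k : ℝ) ≠ 0 := Nat.cast_ne_zero.mpr (by omega)
      have hk1 : (k : ℝ) + 1 ≠ 0 := by positivity
      push_cast
      field_simp
      ring_nf; rw [mul_inv_cancel₀ hk0]; ring

theorem stmt_9 (n m : ℕ) (hn : 1 ≤ n) (hmn : m ≤ n)
    (x : ℕ → ℝ) (hx : ∀ i, 1 ≤ i → i ≤ n → x i = if i ≤ m then 1 else 0)
    (c d : ℝ) (hc : 0 < c) (hd : 0 < d) :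
    (d ≤ c * (x 1 - ∑ i ∈ Finset.Icc 2 n, x i / (((i : ℝ) - 1) * i))) ↔
      (1 ≤ m ∧ d * (m : ℝ) ≤ c) := by
  have hsum : ∑ i ∈ Finset.Icc 2 n, x i / (((i : ℝ) - 1) * i)
      = ∑ i ∈ Finset.Icc 2 m, (1:ℝ) / (((i : ℝ) - 1) * i) := by
    rw [show Finset.Icc 2 m = (Finset.Icc 2 n).filter (· ≤ m) by
      ext i; simp [Finset.mem_filter]; omega]
    rw [Finset.sum_filter]
    apply Finset.sum_congr rfl
    intro i hi
    simp only [Finset.mem_Icc] at hi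
    rw [hx i (by omega) hi.2]
    by_cases h : i ≤ m <;> simp [h]
  rcases Nat.eq_zero_or_pos m with rfl | hm
  · have hx1 : x 1 = 0 := by rw [hx 1 le_rfl hn]; simp
    simp only [hx1, hsum]
    simp
    exact hd
  · have hx1 : x 1 = 1 := by rw [hx 1 le_rfl hn]; simp [Nat.pos_iff_ne_zero.mp hm]
    rw [hx1, hsum, tel_sum m hm]
    have hm0 : (0:ℝ) < (m : ℝ) := Nat.cast_pos.mpr hm
    have : c * (1 - (1 - 1 / m)) = c / m := by field_simp; ring
    rw [this, le_div_iff₀ hm0]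
    exact ⟨fun h => ⟨hm, h⟩, fun h => h.2⟩
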